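/- For any two real symmetric (Hermitian) p×p matrices A and B, the cube of the Lévy distance between their empirical spectral distributions is at most (1/p)·tr((A−B)(A−B)*). -/
import Mathlib


open MeasureTheory Matrix

/-- Empirical spectral distribution of a Hermitian matrix. -/
noncomputable def esd {p : ℕ} (A : Matrix (Fin p) (Fin p) ℝ) (hA : A.IsHermitian) :
    Measure ℝ :=
  ((p : ENNReal))⁻¹ • ∑ i : Fin p, Measure.dirac (hA.eigenvalues i)

/-- Lévy distance between two measures on ℝ. -/
noncomputable def levyDist (μ ν : Measure ℝ) : ℝ :=
  sInf {ε : ℝ | 0 < ε ∧ ∀ x : ℝ,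
    (μ (Set.Iic (x - ε))).toReal - ε ≤ (ν (Set.Iic x)).toReal ∧
    (ν (Set.Iic x)).toReal ≤ (μ (Set.Iic (x + ε))).toReal + ε}

open Finset in
-- CDF of weighted sum of diracs
lemma esd_cdf {p : ℕ} (f : Fin p → ℝ) (x : ℝ) :
    ((((p:ENNReal))⁻¹ • ∑ i : Fin p, Measure.dirac (f i)) (Set.Iic x)).toReal
      = ((univ.filter fun i => f i ≤ x).card : ℝ) / p := by
  rw [Measure.smul_apply, Measure.finset_sum_apply]
  have : ∀ i : Fin p, Measure.dirac (f i) (Set.Iic x) = if f i ≤ x then 1 else 0 := by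
    intro i
    rw [Measure.dirac_apply' _ measurableSet_Iic]
    simp [Set.indicator_apply, Set.mem_Iic]
  simp_rw [this]
  rw [Finset.sum_boole]
  simp [ENNReal.toReal_mul, div_eq_inv_mul]


open Finset in
-- counting lemma
lemma levy_count {p : ℕ} (f g : Fin p → ℝ) {ε : ℝ} (hε : 0 < ε)
    (hsum : ∑ i, (f i - g i)^2 < p * ε^3) (x : ℝ) :
    ((univ.filter fun j => g j ≤ x).card : ℝ)
      ≤ ((univ.filter fun j => f j ≤ x + ε).card : ℝ) + ε * p := by
  by_contra h
  push_neg at h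
  set S := univ.filter fun j => g j ≤ x with hS
  set T := univ.filter fun j => f j ≤ x + ε with hT
  have hsub : ∀ i ∈ S \ T, ε^2 ≤ (f i - g i)^2 := by
    intro i hi
    rw [Finset.mem_sdiff, hS, hT, Finset.mem_filter, Finset.mem_filter] at hi
    have h1 : g i ≤ x := hi.1.2
    have h2 : ¬ (f i ≤ x + ε) := fun hc => hi.2 ⟨Finset.mem_univ i, hc⟩
    push_neg at h2
    nlinarith
  have hcard : (S.card : ℝ) ≤ ((S \ T).card : ℝ) + T.card := by
    have h1 : S.card ≤ (S \ T).card + T.card := by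
      calc S.card ≤ (S ∪ T).card := Finset.card_le_card Finset.subset_union_left
      _ = (S \ T).card + T.card := (Finset.card_sdiff_add_card S T).symm
    exact_mod_cast h1
  have hsum2 : ((S \ T).card : ℝ) * ε^2 ≤ ∑ i, (f i - g i)^2 := by
    calc ((S \ T).card : ℝ) * ε^2 = ∑ _i ∈ S \ T, ε^2 := by rw [Finset.sum_const, nsmul_eq_mul]
    _ ≤ ∑ i ∈ S \ T, (f i - g i)^2 := Finset.sum_le_sum hsub
    _ ≤ ∑ i, (f i - g i)^2 :=
        Finset.sum_le_sum_of_subset_of_nonneg (Finset.subset_univ _) (fun i _ _ => sq_nonneg _)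
  have hεp : ε * p < ((S \ T).card : ℝ) := by linarith
  nlinarith

open Finset in
lemma trace_diag_conj {p : ℕ} (d e : Fin p → ℝ) (W : Matrix (Fin p) (Fin p) ℝ) :
    Matrix.trace (Matrix.diagonal d * W * Matrix.diagonal e * star W)
      = ∑ i, ∑ j, d i * e j * (W i j)^2 := by
  have h1 : Matrix.diagonal d * W * Matrix.diagonal e
      = Matrix.of (fun i j => d i * W i j * e j) := by
    ext i j
    simp [Matrix.mul_diagonal, Matrix.diagonal_mul]
  rw [h1]
  simp only [Matrix.trace, Matrix.diag_apply, Matrix.mul_apply, Matrix.star_apply,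
    star_trivial, Matrix.conjTranspose_apply, Matrix.of_apply]
  congr 1; ext i; congr 1; ext j; ring


open Finset in
lemma hw_trace_sq {p : ℕ} (A : Matrix (Fin p) (Fin p) ℝ) (hA : A.IsHermitian) :
    Matrix.trace (A * A) = ∑ i, (hA.eigenvalues i)^2 := by
  set U := (hA.eigenvectorUnitary : Matrix (Fin p) (Fin p) ℝ) with hUdef
  have hU2 : star U * U = 1 := Matrix.mem_unitaryGroup_iff'.mp hA.eigenvectorUnitary.2
  have hspec : A = U * Matrix.diagonal hA.eigenvalues * star U := by
    have := hA.spectral_theorem; simpa using this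
  set D := Matrix.diagonal hA.eigenvalues with hD
  have : A * A = U * (D * D) * star U := by
    rw [hspec]
    calc U * D * star U * (U * D * star U) = U * D * (star U * U) * D * star U := by
          simp only [Matrix.mul_assoc]
    _ = U * (D * D) * star U := by rw [hU2]; simp only [Matrix.mul_one, Matrix.mul_assoc]
  rw [this, Matrix.trace_mul_cycle, ← Matrix.mul_assoc, hU2, Matrix.one_mul, hD,
    Matrix.diagonal_mul_diagonal, Matrix.trace_diagonal]
  congr 1; ext i; ring


open Finset in
lemma hw_trace_mul_le {p : ℕ} (A B : Matrix (Fin p) (Fin p) ℝ)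
    (hA : A.IsHermitian) (hB : B.IsHermitian) (σ τ : Equiv.Perm (Fin p))
    (hf : Monotone (hA.eigenvalues ∘ σ)) (hg : Monotone (hB.eigenvalues ∘ τ)) :
    Matrix.trace (A * B) ≤ ∑ i, hA.eigenvalues (σ i) * hB.eigenvalues (τ i) := by
  set U := (hA.eigenvectorUnitary : Matrix (Fin p) (Fin p) ℝ) with hUdef
  set V := (hB.eigenvectorUnitary : Matrix (Fin p) (Fin p) ℝ) with hVdef
  have hU1 : U * star U = 1 := Matrix.mem_unitaryGroup_iff.mp hA.eigenvectorUnitary.2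
  have hU2 : star U * U = 1 := Matrix.mem_unitaryGroup_iff'.mp hA.eigenvectorUnitary.2
  have hV1 : V * star V = 1 := Matrix.mem_unitaryGroup_iff.mp hB.eigenvectorUnitary.2
  have hV2 : star V * V = 1 := Matrix.mem_unitaryGroup_iff'.mp hB.eigenvectorUnitary.2
  have hspecA : A = U * Matrix.diagonal hA.eigenvalues * star U := by
    have := hA.spectral_theorem; simpa using this
  have hspecB : B = V * Matrix.diagonal hB.eigenvalues * star V := by
    have := hB.spectral_theorem; simpa using this
  set W := star U * V with hWdef
  have hWstar : star W = star V * U := by rw [hWdef, Matrix.star_mul, star_star]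
  have hW1 : W * star W = 1 := by
    rw [hWdef, hWstar]
    calc star U * V * (star V * U) = star U * (V * star V) * U := by simp only [Matrix.mul_assoc]
    _ = 1 := by rw [hV1, Matrix.mul_one, hU2]
  have hW2 : star W * W = 1 := by
    rw [hWdef, hWstar]
    calc star V * U * (star U * V) = star V * (U * star U) * V := by simp only [Matrix.mul_assoc]
    _ = 1 := by rw [hU1, Matrix.mul_one, hV2]
  set lam := hA.eigenvalues with hlam
  set mu := hB.eigenvalues with hmu
  -- trace (A*B) = ∑ i j, lam i * mu j * (W i j)^2
  have htr : Matrix.trace (A * B) = ∑ i, ∑ j, lam i * mu j * (W i j)^2 := by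
    have hAB : A * B
        = U * (Matrix.diagonal lam * star U * (V * (Matrix.diagonal mu * star V))) := by
      rw [hspecA, hspecB]; simp only [Matrix.mul_assoc]
    rw [hAB, Matrix.trace_mul_comm, ← trace_diag_conj lam mu W, hWdef, hWstar]
    congr 1
    simp only [Matrix.mul_assoc]
  -- doubly stochastic matrix
  set SM := Matrix.of (fun i j => (W (σ i) (τ j))^2) with hSM
  have hSMds : SM ∈ doublyStochastic ℝ (Fin p) := by
    rw [mem_doublyStochastic_iff_sum]
    refine ⟨fun i j => sq_nonneg _, fun i => ?_, fun j => ?_⟩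
    · have h1 : ∑ j, (W (σ i) (τ j))^2 = ∑ j, (W (σ i) j)^2 :=
        Equiv.sum_comp τ (fun j => (W (σ i) j)^2)
      have h2 : (W * star W) (σ i) (σ i) = ∑ j, (W (σ i) j)^2 := by
        simp only [Matrix.mul_apply, Matrix.star_apply, star_trivial,
          Matrix.conjTranspose_apply]
        congr 1; ext j; ring
      simp only [hSM, Matrix.of_apply]
      rw [h1, ← h2, hW1, Matrix.one_apply_eq]
    · have h1 : ∑ i, (W (σ i) (τ j))^2 = ∑ i, (W i (τ j))^2 :=
        Equiv.sum_comp σ (fun i => (W i (τ j))^2)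
      have h2 : (star W * W) (τ j) (τ j) = ∑ i, (W i (τ j))^2 := by
        simp only [Matrix.mul_apply, Matrix.star_apply, star_trivial,
          Matrix.conjTranspose_apply]
        congr 1; ext i; ring
      simp only [hSM, Matrix.of_apply]
      rw [h1, ← h2, hW2, Matrix.one_apply_eq]
  obtain ⟨w, hw0, hw1, hwsum⟩ := exists_eq_sum_perm_of_mem_doublyStochastic hSMds
  have htr2 : Matrix.trace (A * B) = ∑ i, ∑ j, lam (σ i) * mu (τ j) * SM i j := by
    rw [htr]
    rw [← Equiv.sum_comp σ (fun i => ∑ j, lam i * mu j * (W i j)^2)]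
    congr 1; ext i
    rw [← Equiv.sum_comp τ (fun j => lam (σ i) * mu j * (W (σ i) j)^2)]
    simp [hSM]
  have hSMapply : ∀ i j, SM i j = ∑ π : Equiv.Perm (Fin p), w π * (π.permMatrix ℝ) i j := by
    intro i j
    rw [← hwsum]
    simp [Matrix.sum_apply]
  have hperm : ∀ (π : Equiv.Perm (Fin p)) i,
      ∑ j, lam (σ i) * mu (τ j) * (π.permMatrix ℝ) i j = lam (σ i) * mu (τ (π i)) := by
    intro π i
    simp [Equiv.Perm.permMatrix, PEquiv.toMatrix_apply, Equiv.toPEquiv_apply, mul_ite]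
  have hsplit : ∀ i j, lam (σ i) * mu (τ j) * SM i j
      = ∑ π : Equiv.Perm (Fin p), w π * (lam (σ i) * mu (τ j) * (π.permMatrix ℝ) i j) := by
    intro i j
    rw [hSMapply, Finset.mul_sum]
    congr 1; ext π; ring
  have key : Matrix.trace (A * B)
      = ∑ π : Equiv.Perm (Fin p), w π * ∑ i, lam (σ i) * mu (τ (π i)) := by
    rw [htr2]
    simp_rw [hsplit]
    rw [Finset.sum_comm]
    have swap2 : ∀ π : Equiv.Perm (Fin p),
        ∑ i, ∑ j, w π * (lam (σ i) * mu (τ j) * (π.permMatrix ℝ) i j)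
          = w π * ∑ i, lam (σ i) * mu (τ (π i)) := by
      intro π
      rw [Finset.mul_sum]
      congr 1; ext i
      rw [← Finset.mul_sum, hperm π i]
    calc ∑ j, ∑ i, ∑ π : Equiv.Perm (Fin p), w π * (lam (σ i) * mu (τ j) * (π.permMatrix ℝ) i j)
        = ∑ j, ∑ π : Equiv.Perm (Fin p), ∑ i, w π * (lam (σ i) * mu (τ j) * (π.permMatrix ℝ) i j) :=
          Finset.sum_congr rfl (fun j _ => Finset.sum_comm)
    _ = ∑ π : Equiv.Perm (Fin p), ∑ j, ∑ i, w π * (lam (σ i) * mu (τ j) * (π.permMatrix ℝ) i j) :=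
          Finset.sum_comm
    _ = ∑ π : Equiv.Perm (Fin p), ∑ i, ∑ j, w π * (lam (σ i) * mu (τ j) * (π.permMatrix ℝ) i j) :=
          Finset.sum_congr rfl (fun π _ => Finset.sum_comm)
    _ = _ := Finset.sum_congr rfl (fun π _ => swap2 π)
  have hre : ∀ π : Equiv.Perm (Fin p),
      ∑ i, lam (σ i) * mu (τ (π i)) ≤ ∑ i, lam (σ i) * mu (τ i) :=
    fun π => (hf.monovary hg).sum_mul_comp_perm_le_sum_mul
  calc Matrix.trace (A * B)
      = ∑ π : Equiv.Perm (Fin p), w π * ∑ i, lam (σ i) * mu (τ (π i)) := key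
  _ ≤ ∑ π : Equiv.Perm (Fin p), w π * ∑ i, lam (σ i) * mu (τ i) :=
      Finset.sum_le_sum fun π _ => mul_le_mul_of_nonneg_left (hre π) (hw0 π)
  _ = ∑ i, lam (σ i) * mu (τ i) := by rw [← Finset.sum_mul, hw1, one_mul]

open Finset in
lemma hoffman_wielandt {p : ℕ} (A B : Matrix (Fin p) (Fin p) ℝ)
    (hA : A.IsHermitian) (hB : B.IsHermitian) (σ τ : Equiv.Perm (Fin p))
    (hf : Monotone (hA.eigenvalues ∘ σ)) (hg : Monotone (hB.eigenvalues ∘ τ)) :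
    ∑ i, (hA.eigenvalues (σ i) - hB.eigenvalues (τ i))^2
      ≤ Matrix.trace ((A - B) * (A - B)) := by
  have e1 : (A - B) * (A - B) = A * A - A * B - B * A + B * B := by noncomm_ring
  have e2 : Matrix.trace ((A - B) * (A - B))
      = Matrix.trace (A * A) - 2 * Matrix.trace (A * B) + Matrix.trace (B * B) := by
    rw [e1, Matrix.trace_add, Matrix.trace_sub, Matrix.trace_sub, Matrix.trace_mul_comm B A]
    ring
  have hA2 := hw_trace_sq A hA
  have hB2 := hw_trace_sq B hB
  have hAB := hw_trace_mul_le A B hA hB σ τ hf hg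
  have hsA : ∑ i, (hA.eigenvalues (σ i))^2 = ∑ i, (hA.eigenvalues i)^2 :=
    Equiv.sum_comp σ (fun i => (hA.eigenvalues i)^2)
  have hsB : ∑ i, (hB.eigenvalues (τ i))^2 = ∑ i, (hB.eigenvalues i)^2 :=
    Equiv.sum_comp τ (fun i => (hB.eigenvalues i)^2)
  have hexp : ∑ i, (hA.eigenvalues (σ i) - hB.eigenvalues (τ i))^2
      = ∑ i, (hA.eigenvalues (σ i))^2 + ∑ i, (hB.eigenvalues (τ i))^2
        - 2 * ∑ i, hA.eigenvalues (σ i) * hB.eigenvalues (τ i) := by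
    rw [← Finset.sum_add_distrib, Finset.mul_sum, ← Finset.sum_sub_distrib]
    congr 1; ext i; ring
  rw [hexp, e2, hsA, hsB]
  linarith

open Finset in
/-- Corollary A.41 of Bai–Silverstein. -/
theorem levy_esd_cube_le_trace {p : ℕ} (hp : 0 < p)
    (A B : Matrix (Fin p) (Fin p) ℝ) (hA : A.IsHermitian) (hB : B.IsHermitian) :
    (levyDist (esd A hA) (esd B hB)) ^ 3 ≤
      (1 / (p:ℝ)) * Matrix.trace ((A - B) * (A - B)ᵀ) := by
  have hp' : (0:ℝ) < p := by exact_mod_cast hp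
  set σ := Tuple.sort hA.eigenvalues with hσ
  set τ := Tuple.sort hB.eigenvalues with hτ
  have hf : Monotone (hA.eigenvalues ∘ σ) := Tuple.monotone_sort _
  have hg : Monotone (hB.eigenvalues ∘ τ) := Tuple.monotone_sort _
  set f : Fin p → ℝ := hA.eigenvalues ∘ σ with hfdef
  set g : Fin p → ℝ := hB.eigenvalues ∘ τ with hgdef
  -- cdf formulas
  have hcdfA : ∀ y : ℝ, ((esd A hA) (Set.Iic y)).toReal
      = ((univ.filter fun i => f i ≤ y).card : ℝ) / p := by
    intro y
    have h1 : esd A hA = ((p:ENNReal))⁻¹ • ∑ i : Fin p, Measure.dirac (f i) := by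
      unfold esd
      congr 1
      exact (Equiv.sum_comp σ fun i => Measure.dirac (hA.eigenvalues i)).symm
    rw [h1, esd_cdf]
  have hcdfB : ∀ y : ℝ, ((esd B hB) (Set.Iic y)).toReal
      = ((univ.filter fun i => g i ≤ y).card : ℝ) / p := by
    intro y
    have h1 : esd B hB = ((p:ENNReal))⁻¹ • ∑ i : Fin p, Measure.dirac (g i) := by
      unfold esd
      congr 1
      exact (Equiv.sum_comp τ fun i => Measure.dirac (hB.eigenvalues i)).symm
    rw [h1, esd_cdf]
  set Ssum := ∑ i, (f i - g i)^2 with hSsum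
  have hSnn : 0 ≤ Ssum := Finset.sum_nonneg fun i _ => sq_nonneg _
  -- transpose
  have htrans : (A - B)ᵀ = A - B := by
    ext i j
    have h1 : A j i = A i j := by
      conv_lhs => rw [← hA]
      simp [Matrix.conjTranspose_apply]
    have h2 : B j i = B i j := by
      conv_lhs => rw [← hB]
      simp [Matrix.conjTranspose_apply]
    simp [Matrix.transpose_apply, Matrix.sub_apply, h1, h2]
  have hHW : Ssum ≤ Matrix.trace ((A - B) * (A - B)ᵀ) := by
    rw [htrans]
    exact hoffman_wielandt A B hA hB σ τ hf hg
  set d := levyDist (esd A hA) (esd B hB) with hd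
  -- membership criterion
  have hmem : ∀ ε : ℝ, 0 < ε → Ssum < p * ε^3 →
      ε ∈ {ε : ℝ | 0 < ε ∧ ∀ x : ℝ,
        ((esd A hA) (Set.Iic (x - ε))).toReal - ε ≤ ((esd B hB) (Set.Iic x)).toReal ∧
        ((esd B hB) (Set.Iic x)).toReal ≤ ((esd A hA) (Set.Iic (x + ε))).toReal + ε} := by
    intro ε hε hsum
    refine ⟨hε, fun x => ⟨?_, ?_⟩⟩
    · have hsum' : ∑ i, (g i - f i)^2 < p * ε^3 := by
        have : ∑ i, (g i - f i)^2 = Ssum := by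
          rw [hSsum]; congr 1; ext i; ring
        rw [this]; exact hsum
      have hc := levy_count g f hε hsum' (x - ε)
      rw [sub_add_cancel] at hc
      rw [hcdfA, hcdfB]
      have h3 : ((univ.filter fun j => f j ≤ x - ε).card : ℝ) / p
          ≤ (((univ.filter fun j => g j ≤ x).card : ℝ) + ε * p) / p :=
        (div_le_div_iff_of_pos_right hp').mpr hc
      have h4 : (((univ.filter fun j => g j ≤ x).card : ℝ) + ε * p) / p
          = ((univ.filter fun j => g j ≤ x).card : ℝ) / p + ε := by
        field_simp
      linarith
    · have hc := levy_count f g hε hsum x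
      rw [hcdfA, hcdfB]
      have h3 : ((univ.filter fun j => g j ≤ x).card : ℝ) / p
          ≤ (((univ.filter fun j => f j ≤ x + ε).card : ℝ) + ε * p) / p :=
        (div_le_div_iff_of_pos_right hp').mpr hc
      have h4 : (((univ.filter fun j => f j ≤ x + ε).card : ℝ) + ε * p) / p
          = ((univ.filter fun j => f j ≤ x + ε).card : ℝ) / p + ε := by
        field_simp
      linarith
  have hd0 : 0 ≤ d := by
    rw [hd]; unfold levyDist
    exact Real.sInf_nonneg fun ε hε => hε.1.le
  have hdle : ∀ ε : ℝ, 0 < ε → Ssum < p * ε^3 → d ≤ ε := by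
    intro ε hε hsum
    rw [hd]; unfold levyDist
    exact csInf_le ⟨0, fun y hy => hy.1.le⟩ (hmem ε hε hsum)
  have key : d^3 ≤ (1 / (p:ℝ)) * Ssum := by
    by_contra hcon
    push_neg at hcon
    obtain ⟨c, hc1, hc2⟩ := exists_between hcon
    have hMnn : 0 ≤ (1 / (p:ℝ)) * Ssum := by positivity
    have hcpos : 0 < c := lt_of_le_of_lt hMnn hc1
    set ε := c ^ ((1:ℝ)/3) with hε
    have hεpos : 0 < ε := Real.rpow_pos_of_pos hcpos _
    have hε3 : ε^3 = c := by
      rw [hε, ← Real.rpow_natCast (c ^ ((1:ℝ)/3)) 3, ← Real.rpow_mul hcpos.le]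
      norm_num
    have hsum : Ssum < p * ε^3 := by
      rw [hε3]
      have : Ssum = p * ((1 / (p:ℝ)) * Ssum) := by field_simp
      rw [this]
      exact (mul_lt_mul_iff_right₀ hp').mpr hc1
    have hdc := hdle ε hεpos hsum
    have : d^3 ≤ ε^3 := pow_le_pow_left₀ hd0 hdc 3
    rw [hε3] at this
    linarith
  calc d^3 ≤ (1 / (p:ℝ)) * Ssum := key
  _ ≤ (1 / (p:ℝ)) * Matrix.trace ((A - B) * (A - B)ᵀ) := by
      apply mul_le_mul_of_nonneg_left hHW
      positivity
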